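/- arXiv:1902.03852 — 7 statements merged into one kernel-verified Lean document; each statement's English description precedes it below -/
import Mathlib

section
/- (1) Every right ideal R of nA* is generated, as a right ideal, by a unique initial factor code, namely by P = R \ (R·A_{ε,n}); i.e. R = P·nA*, P is an initial factor code, and any initial factor code generating R equals P. (2) If a right ideal R of nA* is generated by some joinless code, then the unique initial factor code generating R is joinless. -/
namespace BrinThompson

abbrev W (A : Type*) (n : ℕ) : Type _ := Fin n → List A

variable {A : Type*} {n : ℕ}

/-- Coordinatewise concatenation in `nA*`. -/
def cat (u x : W A n) : W A n := fun i => u i ++ x i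

/-- `u ≤_init v` : `u` is an initial factor of `v`. -/
def initLE (u v : W A n) : Prop := ∃ x : W A n, v = cat u x

/-- `w` is the join (least upper bound) of `u` and `v` w.r.t. `≤_init`. -/
def isJoin (u v w : W A n) : Prop :=
  initLE u w ∧ initLE v w ∧ ∀ z : W A n, initLE u z → initLE v z → initLE w z

/-- `u` and `v` have a join. -/
def HasJoin (u v : W A n) : Prop := ∃ w : W A n, isJoin u v w

/-- A joinless code: no two distinct elements have a join. -/
def JoinlessCode (S : Set (W A n)) : Prop :=
  ∀ u ∈ S, ∀ v ∈ S, u ≠ v → ¬ HasJoin u v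

/-- A maximal joinless code: joinless, and every element of `nA*` has a join
with some element of the code. -/
def MaxJoinlessCode (S : Set (W A n)) : Prop :=
  JoinlessCode S ∧ ∀ x : W A n, ∃ p ∈ S, HasJoin x p

/-- The right ideal `C · nA*` generated by `C`. -/
def genIdeal (C : Set (W A n)) : Set (W A n) := {w | ∃ c ∈ C, ∃ x : W A n, w = cat c x}

def IsRightIdeal (R : Set (W A n)) : Prop := genIdeal R = R

/-- An initial factor code: pairwise `≤_init`-incomparable set. -/
def InitFactorCode (S : Set (W A n)) : Prop :=
  ∀ u ∈ S, ∀ v ∈ S, initLE u v → u = v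

/-- `A_{ε,n}`: tuples with one coordinate a single letter and the rest empty. -/
def Aeps (A : Type*) (n : ℕ) : Set (W A n) :=
  {w | ∃ i : Fin n, ∃ a : A, w i = [a] ∧ ∀ j : Fin n, j ≠ i → w j = []}

/-- `(ε)^n`, the tuple of empty strings. -/
def epsn (A : Type*) (n : ℕ) : W A n := fun _ => []

/-- `nA^ω`: `n`-tuples of one-sided infinite sequences over `A`. -/
abbrev Winf (A : Type*) (n : ℕ) : Type _ := Fin n → ℕ → A

/-- Concatenation of a finite tuple `p ∈ nA*` with an infinite tuple `u ∈ nA^ω`. -/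
def catInf (p : W A n) (u : Winf A n) : Winf A n :=
  fun i k => if h : k < (p i).length then (p i).get ⟨k, h⟩ else u i (k - (p i).length)

/-- `v` is an interior vertex of the `P`-dag: a strict initial factor of
some element of `P`. -/
def Interior (P : Set (W A n)) (v : W A n) : Prop := ∃ p ∈ P, initLE v p ∧ v ≠ p

/-- The child of `v` in direction `i`, extended by letter `a`. -/
def child (v : W A n) (i : Fin n) (a : A) : W A n := Function.update v i (v i ++ [a])

/-- A leaf of the interior dag of `P`: an interior vertex none of whose
children is interior. -/
def InteriorLeaf (P : Set (W A n)) (v : W A n) : Prop :=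
  Interior P v ∧ ∀ (i : Fin n) (a : A), ¬ Interior P (child v i a)

/-- `v_+ = (v · A_{ε,n}) ∩ P`, the set of children of `v` belonging to `P`. -/
def vplus (P : Set (W A n)) (v : W A n) : Set (W A n) :=
  {w | (∃ (i : Fin n) (a : A), w = child v i a) ∧ w ∈ P}

/-- The depth of a vertex: the sum of the coordinate lengths. -/
def depth (v : W A n) : ℕ := ∑ i, (v i).length

/-- One-step restriction of `P` at `(p, i)`. -/
def oneStep (P : Set (W A n)) (p : W A n) (i : Fin n) : Set (W A n) :=
  (P \ {p}) ∪ {w | ∃ a : A, w = child p i a}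

/-- One step in a sequence of one-step restrictions. -/
def RestrStep (P Q : Set (W A n)) : Prop := ∃ p ∈ P, ∃ i : Fin n, Q = oneStep P p i

/-- The box code `A^{k_1} × … × A^{k_n}`. -/
def box (A : Type*) {n : ℕ} (k : Fin n → ℕ) : Set (W A n) :=
  {w | ∀ i : Fin n, (w i).length = k i}

/-- Elementwise join `P ∨ Q` of two sets, ranging over the joins that exist. -/
def setJoin (P Q : Set (W A n)) : Set (W A n) :=
  {w | ∃ p ∈ P, ∃ q ∈ Q, isJoin p q w}

/-- `ℓ(S)`: the maximum coordinate length occurring in `S`. -/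
noncomputable def ell (S : Set (W A n)) : ℕ :=
  sSup {m | ∃ z ∈ S, ∃ i : Fin n, (z i).length = m}

/-- An element of `n RI^fin_A`: an injective right ideal morphism of `nA*`
whose domain code and image code are finite maximal joinless codes.
`toFun` is a total function whose values outside `Dom` are irrelevant. -/
structure RIMfin (A : Type*) (n : ℕ) where
  Dom : Set (W A n)
  toFun : W A n → W A n
  domC : Set (W A n)
  imC : Set (W A n)
  ideal : IsRightIdeal Dom
  morph : ∀ x ∈ Dom, ∀ w : W A n, toFun (cat x w) = cat (toFun x) w
  inj : Set.InjOn toFun Dom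
  domC_gen : genIdeal domC = Dom
  imC_gen : genIdeal imC = toFun '' Dom
  domC_fin : domC.Finite
  domC_max : MaxJoinlessCode domC
  imC_fin : imC.Finite
  imC_max : MaxJoinlessCode imC

/-- `ℓ(f) = max{ℓ(z) : z ∈ domC(f) ∪ imC(f)}`. -/
noncomputable def ellF (F : RIMfin A n) : ℕ := ell (F.domC ∪ F.imC)

/-- `G` extends `F` (as partial functions). -/
def Extends (F G : RIMfin A n) : Prop :=
  F.Dom ⊆ G.Dom ∧ ∀ x ∈ F.Dom, G.toFun x = F.toFun x

/-- `F` and `G` are equal as partial functions. -/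
def EquivRIM (F G : RIMfin A n) : Prop :=
  F.Dom = G.Dom ∧ ∀ x ∈ F.Dom, F.toFun x = G.toFun x

/-- `G` is a maximal extension of `F` in `n RI^fin_A`. -/
def MaxExtension (F G : RIMfin A n) : Prop :=
  Extends F G ∧ ∀ H : RIMfin A n, Extends G H → EquivRIM G H


section Aux

lemma cat_assoc (u x y : W A n) : cat (cat u x) y = cat u (cat x y) :=
  funext fun i => List.append_assoc _ _ _

lemma cat_epsn (u : W A n) : cat u (epsn A n) = u :=
  funext fun i => List.append_nil _

lemma initLE_iff {u v : W A n} : initLE u v ↔ ∀ i, u i <+: v i := by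
  constructor
  · rintro ⟨x, rfl⟩ i; exact ⟨x i, rfl⟩
  · intro h
    refine ⟨fun i => (v i).drop (u i).length, funext fun i => ?_⟩
    obtain ⟨t, ht⟩ := h i
    simp [cat, ← ht]

lemma mem_of_ideal {R : Set (W A n)} (hR : IsRightIdeal R) {r : W A n}
    (hr : r ∈ R) (x : W A n) : cat r x ∈ R := by
  rw [IsRightIdeal] at hR
  rw [← hR]; exact ⟨r, hr, x, rfl⟩

lemma depth_cat (u x : W A n) : depth (cat u x) = depth u + depth x := by
  simp [depth, cat, Finset.sum_add_distrib]

lemma depth_aeps {a : W A n} (ha : a ∈ Aeps A n) : depth a = 1 := by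
  obtain ⟨i, b, h1, h2⟩ := ha
  rw [depth, Finset.sum_eq_single i]
  · simp [h1]
  · intro j _ hj; simp [h2 j hj]
  · simp

/-- Key lemma: a proper extension (within a right ideal) of an element of the
ideal lies in `R · A_{ε,n}`. -/
lemma key {R : Set (W A n)} (hR : IsRightIdeal R) {u v : W A n}
    (hu : u ∈ R) (huv : initLE u v) (hne : u ≠ v) :
    v ∈ {w | ∃ r ∈ R, ∃ a ∈ Aeps A n, w = cat r a} := by
  rw [initLE_iff] at huv
  have hex : ∃ i, u i ≠ v i := by
    by_contra h; push_neg at h; exact hne (funext h)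
  obtain ⟨i, hi⟩ := hex
  have hlt : (u i).length < (v i).length := by
    rcases lt_or_eq_of_le (huv i).length_le with h | h
    · exact h
    · exact absurd ((huv i).eq_of_length h) hi
  have hvne : v i ≠ [] := by
    intro h; rw [h] at hlt; simp at hlt
  set r : W A n := Function.update v i ((v i).dropLast) with hrdef
  have hur : initLE u r := by
    rw [initLE_iff]
    intro j
    by_cases hj : j = i
    · subst hj
      obtain ⟨t, ht⟩ := huv j
      have htne : t ≠ [] := by
        intro h; rw [h] at ht; simp at ht; rw [ht] at hi; exact hi rfl
      simp only [hrdef, Function.update_self, ← ht,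
        List.dropLast_append_of_ne_nil htne]
      exact ⟨t.dropLast, rfl⟩
    · simp only [hrdef, Function.update_of_ne hj]; exact huv j
  have hrR : r ∈ R := by
    obtain ⟨x, hx⟩ := hur
    rw [hx]; exact mem_of_ideal hR hu x
  refine ⟨r, hrR, fun j => if j = i then [(v i).getLast hvne] else [], ?_, ?_⟩
  · exact ⟨i, (v i).getLast hvne, by simp, fun j hj => by simp [hj]⟩
  · funext j
    by_cases hj : j = i
    · subst hj
      simp [cat, hrdef, List.dropLast_append_getLast hvne]
    · simp [cat, hrdef, Function.update_of_ne hj, hj]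

end Aux

/-- Every right ideal of `nA*` is generated by a unique initial factor code,
namely `P = R \ R·A_{ε,n}`; and if `R` is generated by some joinless code then
this unique initial factor code is joinless. -/
theorem rightIdeal_unique_initFactorCode {A : Type*} [Fintype A] [Nonempty A]
    {n : ℕ} (hn : 1 ≤ n) (R : Set (W A n)) (hR : IsRightIdeal R) :
    (genIdeal (R \ {w | ∃ r ∈ R, ∃ a ∈ Aeps A n, w = cat r a}) = R ∧
     InitFactorCode (R \ {w | ∃ r ∈ R, ∃ a ∈ Aeps A n, w = cat r a}) ∧
     (∀ Q : Set (W A n), InitFactorCode Q → genIdeal Q = R →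
        Q = R \ {w | ∃ r ∈ R, ∃ a ∈ Aeps A n, w = cat r a})) ∧
    ((∃ C : Set (W A n), JoinlessCode C ∧ genIdeal C = R) →
      JoinlessCode (R \ {w | ∃ r ∈ R, ∃ a ∈ Aeps A n, w = cat r a})) := by
  set M : Set (W A n) := {w | ∃ r ∈ R, ∃ a ∈ Aeps A n, w = cat r a} with hMdef
  set P : Set (W A n) := R \ M with hPdef
  have hgen : genIdeal P = R := by
    apply Set.Subset.antisymm
    · rintro w ⟨p, hp, x, rfl⟩
      exact mem_of_ideal hR hp.1 x
    · intro w hw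
      have haux : ∀ m, ∀ w : W A n, depth w = m → w ∈ R → w ∈ genIdeal P := by
        intro m
        induction m using Nat.strong_induction_on with
        | _ m ih =>
          intro w hd hw
          by_cases hMw : w ∈ M
          · obtain ⟨r, hr, a, ha, rfl⟩ := hMw
            have hdr : depth r < m := by
              rw [← hd, depth_cat, depth_aeps ha]; omega
            obtain ⟨p, hp, x, rfl⟩ := ih (depth r) hdr r rfl hr
            exact ⟨p, hp, cat x a, cat_assoc p x a⟩
          · exact ⟨w, ⟨hw, hMw⟩, epsn A n, (cat_epsn w).symm⟩
      exact haux (depth w) w rfl hw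
  have hcode : InitFactorCode P := by
    intro u hu v hv huv
    by_contra hne
    exact hv.2 (key hR hu.1 huv hne)
  have huniq : ∀ Q : Set (W A n), InitFactorCode Q → genIdeal Q = R → Q = P := by
    intro Q hQ hQgen
    have hQsubR : Q ⊆ R := by
      intro q hq
      rw [← hQgen]; exact ⟨q, hq, epsn A n, (cat_epsn q).symm⟩
    apply Set.Subset.antisymm
    · intro q hq
      refine ⟨hQsubR hq, ?_⟩
      rintro ⟨r, hr, a, ha, rfl⟩
      rw [← hQgen] at hr
      obtain ⟨q', hq', x, rfl⟩ := hr
      have heq : q' = cat (cat q' x) a :=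
        hQ q' hq' _ hq ⟨cat x a, cat_assoc _ _ _⟩
      have hd := congrArg depth heq
      rw [depth_cat, depth_cat, depth_aeps ha] at hd
      omega
    · intro p hp
      have hpR : p ∈ R := hp.1
      rw [← hQgen] at hpR
      obtain ⟨q, hq, x, hx⟩ := hpR
      by_cases hqp : q = p
      · exact hqp ▸ hq
      · exact absurd (key hR (hQsubR hq) ⟨x, hx⟩ hqp) hp.2
  refine ⟨⟨hgen, hcode, huniq⟩, ?_⟩
  rintro ⟨C, hCjl, hCgen⟩
  have hCcode : InitFactorCode C := by
    intro u hu v hv huv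
    by_contra hne
    exact hCjl u hu v hv hne
      ⟨v, huv, ⟨epsn A n, (cat_epsn v).symm⟩, fun z _ h2 => h2⟩
  rw [← huniq C hCcode hCgen]
  exact hCjl

end BrinThompson
end

section
/- Let P ⊆ nA* be a finite maximal joinless code with P ≠ {(ε)^n}, and let v = (v_1,…,v_n) be a leaf of the interior dag of P, with v_+ = {v·a : a ∈ A_{ε,n}} ∩ P. Then v_+ is nonempty, and there is a unique index i ∈ {1,…,n} such that v_+ ⊆ {(v_1,…,v_{i−1}, v_i a, v_{i+1},…,v_n) : a ∈ A}. -/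
namespace BrinThompson

variable {A : Type*} {n : ℕ}

lemma hasJoin_of_comp {u v : W A n} (h : ∀ i, u i <+: v i ∨ v i <+: u i) :
    HasJoin u v := by
  classical
  refine ⟨fun i => if u i <+: v i then v i else u i, ?_, ?_, ?_⟩
  · rw [initLE_iff]; intro i
    by_cases hi : u i <+: v i <;> simp [hi]
  · rw [initLE_iff]; intro i
    by_cases hi : u i <+: v i <;> simp [hi]
    rcases h i with h' | h'
    · exact absurd h' hi
    · exact h'
  · intro z hu hv
    rw [initLE_iff] at hu hv ⊢
    intro i
    by_cases hi : u i <+: v i <;> simp [hi]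
    · exact hv i
    · exact hu i

lemma child_apply_self (v : W A n) (i : Fin n) (a : A) : child v i a i = v i ++ [a] := by
  simp [child]

lemma child_apply_ne (v : W A n) {i j : Fin n} (a : A) (h : j ≠ i) :
    child v i a j = v j := by
  simp [child, Function.update_of_ne h]

lemma child_dir_eq {v : W A n} {i j : Fin n} {a b : A}
    (h : child v i a = child v j b) : i = j := by
  by_contra hij
  have := congrFun h i
  rw [child_apply_self, child_apply_ne v b hij] at this
  have := congrArg List.length this
  simp at this

/-- For a finite maximal joinless code `P ≠ {(ε)^n}` and any leaf `v` of the
interior dag of `P`, the set `v_+` is nonempty and is contained in the set of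
children of `v` in a unique direction `i`. -/
theorem interiorLeaf_children {A : Type*} [Fintype A] [Nonempty A] {n : ℕ}
    (hn : 1 ≤ n) (P : Set (W A n)) (hfin : P.Finite)
    (hmax : MaxJoinlessCode P) (hne : P ≠ {epsn A n})
    (v : W A n) (hv : InteriorLeaf P v) :
    (vplus P v).Nonempty ∧
    ∃! i : Fin n, vplus P v ⊆ {w | ∃ a : A, w = child v i a} := by
  classical
  obtain ⟨⟨p, hpP, ⟨x, rfl⟩, hvp⟩, hleaf⟩ := hv
  -- find a coordinate where x is nonempty
  have hx : ∃ i, x i ≠ [] := by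
    by_contra h
    push_neg at h
    exact hvp (funext fun i => by simp [cat, h i])
  obtain ⟨i₀, hi₀⟩ := hx
  obtain ⟨a₀, t, hxi⟩ : ∃ a t, x i₀ = a :: t := by
    cases h : x i₀ with
    | nil => exact absurd h hi₀
    | cons a t => exact ⟨a, t, rfl⟩
  -- child v i₀ a₀ is an initial factor of cat v x
  have hch : initLE (child v i₀ a₀) (cat v x) := by
    rw [initLE_iff]
    intro j
    by_cases hj : j = i₀
    · subst hj
      rw [child_apply_self]
      exact ⟨t, by simp [cat, hxi]⟩
    · rw [child_apply_ne v a₀ hj]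
      exact ⟨x j, rfl⟩
  -- since v is a leaf, child v i₀ a₀ = cat v x ∈ P
  have heq : child v i₀ a₀ = cat v x := by
    by_contra h
    exact hleaf i₀ a₀ ⟨cat v x, hpP, hch, h⟩
  have hmem : child v i₀ a₀ ∈ vplus P v := ⟨⟨i₀, a₀, rfl⟩, heq ▸ hpP⟩
  -- every element of v₊ is a child in direction i₀
  have hsub : vplus P v ⊆ {w | ∃ a : A, w = child v i₀ a} := by
    rintro w ⟨⟨j, b, rfl⟩, hwP⟩
    by_cases hj : j = i₀
    · exact ⟨b, by rw [hj]⟩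
    · exfalso
      have hne' : child v j b ≠ child v i₀ a₀ := fun h => hj (child_dir_eq h)
      refine hmax.1 _ hwP _ (heq ▸ hpP) hne' (hasJoin_of_comp fun k => ?_)
      by_cases hk : k = j
      · subst hk
        right
        rw [child_apply_self, child_apply_ne v a₀ hj]
        exact ⟨[b], rfl⟩
      · rw [child_apply_ne v b hk]
        by_cases hk' : k = i₀
        · subst hk'
          left
          rw [child_apply_self]
          exact ⟨[a₀], rfl⟩
        · rw [child_apply_ne v a₀ hk']
          left; exact ⟨[], by simp⟩
  refine ⟨⟨child v i₀ a₀, hmem⟩, i₀, hsub, ?_⟩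
  intro j hjsub
  obtain ⟨b, hb⟩ := hjsub hmem
  exact (child_dir_eq hb).symm

end BrinThompson
end

section
/- For every n ≥ 3 there exists a finite maximal joinless code P ⊆ n{0,1}* such that for every leaf v of the interior dag of P and every i ∈ {1,…,n}, v_+ ≠ {(v_1,…,v_{i−1}, v_i a, v_{i+1},…,v_n) : a ∈ {0,1}}, where v_+ = {v·a : a ∈ A_{ε,n}} ∩ P. In particular, for n = 3 the set P = {(0,0,ε), (1,ε,0), (ε,1,1), (0,1,0), (1,0,1)} is a finite maximal joinless code with this property. -/
namespace BrinThompson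

variable {A : Type*} {n : ℕ}

/-- The Lawson–Vdovina example: `{(0,0,ε),(1,ε,0),(ε,1,1),(0,1,0),(1,0,1)}`. -/
def P3 : Set (W Bool 3) :=
  {![[false], [false], []], ![[true], [], [false]], ![[], [true], [true]],
   ![[false], [true], [false]], ![[true], [false], [true]]}

lemma hasJoin_iff {u v : W A n} :
    HasJoin u v ↔ ∀ i, u i <+: v i ∨ v i <+: u i := by
  constructor
  · rintro ⟨w, hu, hv, -⟩ i
    exact List.prefix_or_prefix_of_prefix (initLE_iff.mp hu i) (initLE_iff.mp hv i)
  · intro h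
    classical
    refine ⟨fun i => if u i <+: v i then v i else u i, ?_, ?_, ?_⟩
    · rw [initLE_iff]; intro i
      by_cases hc : u i <+: v i <;> simp [hc]
    · rw [initLE_iff]; intro i
      by_cases hc : u i <+: v i <;> simp [hc]
      exact (h i).resolve_left hc
    · intro z hu hv
      rw [initLE_iff] at hu hv ⊢
      intro i
      by_cases hc : u i <+: v i <;> simp [hc]
      exacts [hv i, hu i]

lemma P3_mem_iff {p : W Bool 3} : p ∈ P3 ↔
    p = ![[false], [false], []] ∨ p = ![[true], [], [false]] ∨
    p = ![[], [true], [true]] ∨ p = ![[false], [true], [false]] ∨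
    p = ![[true], [false], [true]] := by
  simp [P3, Set.mem_insert_iff, Set.mem_singleton_iff]

lemma P3_finite : P3.Finite := by
  unfold P3
  exact (((((Set.finite_singleton _).insert _).insert _).insert _).insert _)

lemma P3_joinless : JoinlessCode P3 := by
  intro u hu v hv hne hj
  rw [hasJoin_iff] at hj
  rw [P3_mem_iff] at hu hv
  rcases hu with rfl | rfl | rfl | rfl | rfl <;>
    rcases hv with rfl | rfl | rfl | rfl | rfl <;>
      first
        | exact hne rfl
        | revert hj; decide

lemma P3_core : ∀ p ∈ P3, ∀ q ∈ P3, ∀ i : Fin 3,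
    (∀ j, j ≠ i → p j = q j) →
    ¬ (p i = (p i).dropLast ++ [true] ∧ q i = (p i).dropLast ++ [false]) := by
  intro p hp q hq i
  rw [P3_mem_iff] at hp hq
  rcases hp with rfl | rfl | rfl | rfl | rfl <;>
    rcases hq with rfl | rfl | rfl | rfl | rfl <;> revert i <;> decide

lemma P3_no_pair (v : W Bool 3) (i : Fin 3) :
    ¬ (child v i true ∈ P3 ∧ child v i false ∈ P3) := by
  rintro ⟨hp, hq⟩
  refine P3_core _ hp _ hq i (fun j hj => ?_) ⟨?_, ?_⟩
  · simp [child, Function.update_of_ne hj]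
  · simp [child, List.dropLast_concat]
  · simp [child, List.dropLast_concat]

lemma leaf_cond {P : Set (W Bool n)}
    (h : ∀ v i, ¬ (child v i true ∈ P ∧ child v i false ∈ P)) :
    ∀ v, InteriorLeaf P v → ∀ i : Fin n,
      vplus P v ≠ {w | ∃ a : Bool, w = child v i a} := by
  intro v _ i heq
  have h1 : child v i true ∈ vplus P v := by rw [heq]; exact ⟨true, rfl⟩
  have h2 : child v i false ∈ vplus P v := by rw [heq]; exact ⟨false, rfl⟩
  exact h v i ⟨h1.2, h2.2⟩

/-- Selection function for maximality of `P3`. -/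
def pick : Bool → Bool → Bool → W Bool 3
  | false, false, _ => ![[false], [false], []]
  | false, true, false => ![[false], [true], [false]]
  | false, true, true => ![[], [true], [true]]
  | true, false, false => ![[true], [], [false]]
  | true, false, true => ![[true], [false], [true]]
  | true, true, false => ![[true], [], [false]]
  | true, true, true => ![[], [true], [true]]

lemma pick_mem (b1 b2 b3 : Bool) : pick b1 b2 b3 ∈ P3 := by
  rw [P3_mem_iff]
  cases b1 <;> cases b2 <;> cases b3 <;> simp [pick]

lemma pick_coord (b1 b2 b3 : Bool) (i : Fin 3) :
    pick b1 b2 b3 i = [] ∨ pick b1 b2 b3 i = [![b1, b2, b3] i] := by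
  revert i; cases b1 <;> cases b2 <;> cases b3 <;> decide

lemma P3_max : ∀ x : W Bool 3, ∃ p ∈ P3, HasJoin x p := by
  intro x
  refine ⟨pick ((x 0).headD false) ((x 1).headD false) ((x 2).headD false),
    pick_mem _ _ _, ?_⟩
  rw [hasJoin_iff]
  intro i
  rcases pick_coord ((x 0).headD false) ((x 1).headD false) ((x 2).headD false) i
    with h | h
  · rw [h]; exact Or.inr (List.nil_prefix)
  · rw [h]
    have hh : (![(x 0).headD false, (x 1).headD false, (x 2).headD false]) i
        = (x i).headD false := by fin_cases i <;> rfl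
    rw [hh]
    cases hx : x i with
    | nil => left; exact List.nil_prefix
    | cons a t => right; exact ⟨t, rfl⟩

lemma P3_maxJoinless : MaxJoinlessCode P3 := ⟨P3_joinless, P3_max⟩

/-- Extension of a triple of words to an `n`-tuple by empty words. -/
def extn (hn : 3 ≤ n) (u : W Bool 3) : W Bool n :=
  fun j => if h : (j : ℕ) < 3 then u ⟨j, h⟩ else []

lemma extn_lt (hn : 3 ≤ n) (u : W Bool 3) (j : Fin n) (h : (j : ℕ) < 3) :
    extn hn u j = u ⟨j, h⟩ := dif_pos h

lemma extn_ge (hn : 3 ≤ n) (u : W Bool 3) (j : Fin n) (h : ¬ (j : ℕ) < 3) :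
    extn hn u j = [] := dif_neg h

lemma extn_castLE (hn : 3 ≤ n) (u : W Bool 3) (k : Fin 3) :
    extn hn u (Fin.castLE hn k) = u k := by
  rw [extn_lt hn u _ k.2]; exact congrArg u (Fin.ext rfl)

lemma Pn_joinless (hn : 3 ≤ n) : JoinlessCode (extn hn '' P3) := by
  rintro u ⟨p, hp, rfl⟩ v ⟨q, hq, rfl⟩ hne hj
  have hpq : p ≠ q := fun h => hne (by rw [h])
  refine P3_joinless p hp q hq hpq ?_
  rw [hasJoin_iff] at hj ⊢
  intro k
  have := hj (Fin.castLE hn k)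
  rwa [extn_castLE, extn_castLE] at this

lemma Pn_max (hn : 3 ≤ n) : ∀ x : W Bool n, ∃ p ∈ extn hn '' P3, HasJoin x p := by
  intro x
  obtain ⟨p, hp, hj⟩ := P3_max (fun k => x (Fin.castLE hn k))
  refine ⟨extn hn p, ⟨p, hp, rfl⟩, ?_⟩
  rw [hasJoin_iff] at hj ⊢
  intro j
  by_cases h : (j : ℕ) < 3
  · have hc : Fin.castLE hn ⟨(j : ℕ), h⟩ = j := Fin.ext rfl
    have := hj ⟨(j : ℕ), h⟩
    rw [hc] at this
    rwa [extn_lt hn p j h]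
  · right; rw [extn_ge hn p j h]; exact List.nil_prefix

lemma Pn_no_pair (hn : 3 ≤ n) (v : W Bool n) (i : Fin n) :
    ¬ (child v i true ∈ extn hn '' P3 ∧ child v i false ∈ extn hn '' P3) := by
  rintro ⟨⟨p, hp, hpe⟩, ⟨q, hq, hqe⟩⟩
  have hi : (i : ℕ) < 3 := by
    by_contra h
    have h1 := congrFun hpe i
    rw [extn_ge hn p i h] at h1
    have : ([] : List Bool) = v i ++ [true] := by
      simpa [child] using h1
    simp at this
  set k : Fin 3 := ⟨(i : ℕ), hi⟩ with hk
  have hik : Fin.castLE hn k = i := Fin.ext rfl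
  have hpk : p k = v i ++ [true] := by
    have := congrFun hpe (Fin.castLE hn k)
    rw [extn_castLE] at this
    rw [this, hik]; simp [child]
  have hqk : q k = v i ++ [false] := by
    have := congrFun hqe (Fin.castLE hn k)
    rw [extn_castLE] at this
    rw [this, hik]; simp [child]
  refine P3_core p hp q hq k (fun j hj => ?_) ⟨?_, ?_⟩
  · have hji : Fin.castLE hn j ≠ i := by
      rw [← hik]
      exact fun hcontra => hj (Fin.castLE_injective hn hcontra)
    have h1 := congrFun hpe (Fin.castLE hn j)
    have h2 := congrFun hqe (Fin.castLE hn j)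
    rw [extn_castLE] at h1 h2
    rw [h1, h2]
    simp [child, Function.update_of_ne hji]
  · rw [hpk, List.dropLast_concat]
  · rw [hpk, hqk, List.dropLast_concat]

/-- For every `n ≥ 3` there is a finite maximal joinless code in `n{0,1}*`
such that no leaf of the interior dag has its `v_+` equal to a full set of
children in one direction; for `n = 3`, `P3` is such a code. -/
theorem exists_maxJoinless_no_full_interiorLeaf :
    (∀ n : ℕ, 3 ≤ n → ∃ P : Set (W Bool n), P.Finite ∧ MaxJoinlessCode P ∧
      ∀ v : W Bool n, InteriorLeaf P v → ∀ i : Fin n,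
        vplus P v ≠ {w | ∃ a : Bool, w = child v i a}) ∧
    (P3.Finite ∧ MaxJoinlessCode P3 ∧
      ∀ v : W Bool 3, InteriorLeaf P3 v → ∀ i : Fin 3,
        vplus P3 v ≠ {w | ∃ a : Bool, w = child v i a}) := by
  constructor
  · intro n hn
    exact ⟨extn hn '' P3, P3_finite.image _, ⟨Pn_joinless hn, Pn_max hn⟩,
      leaf_cond (Pn_no_pair hn)⟩
  · exact ⟨P3_finite, P3_maxJoinless, leaf_cond P3_no_pair⟩

end BrinThompson
end

section
/- Assume |A| ≥ 2. (1) For every finite maximal joinless code P ⊆ nA* there exists N ∈ ℕ such that |P| = 1 + (|A| − 1)·N; i.e. |A| − 1 divides |P| − 1. (2) Conversely, for every N ∈ ℕ there exists a finite maximal joinless code in nA* of cardinality 1 + (|A| − 1)·N. -/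
namespace BrinThompson

variable {A : Type*} {n : ℕ}

lemma comp_pref {l m : List A} (h : l <+: m ∨ m <+: l) (hl : l.length ≤ m.length) :
    l <+: m := by
  rcases h with h | h
  · exact h
  · cases h.eq_of_length (le_antisymm h.length_le hl)
    exact List.prefix_refl _

lemma card_pref {A : Type*} [Fintype A] [DecidableEq A] {L : ℕ} (c : List A) (hc : c.length ≤ L) :
    Fintype.card {l : List.Vector A L // c <+: l.toList} = Fintype.card A ^ (L - c.length) := by
  rw [← card_vector (α := A) (L - c.length)]
  refine Fintype.card_congr ?_
  refine
    { toFun := fun x => ⟨x.1.toList.drop c.length, by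
        simp [x.1.toList_length]⟩
      invFun := fun t => ⟨⟨c ++ t.toList, by simp [t.toList_length]; omega⟩, ⟨t.toList, rfl⟩⟩
      left_inv := ?_
      right_inv := ?_ }
  · rintro ⟨⟨l, hl⟩, ⟨t, ht⟩⟩
    apply Subtype.ext; apply Subtype.ext
    show c ++ List.drop c.length l = l
    have ht' : c ++ t = l := ht
    subst ht'
    rw [List.drop_left]
  · rintro ⟨t, ht⟩
    apply Subtype.ext
    show List.drop c.length (c ++ t) = t
    rw [List.drop_left]

lemma modeq_sum {ι : Type*} (t : Finset ι) (f : ι → ℕ) (m : ℕ)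
    (h : ∀ i ∈ t, f i ≡ 1 [MOD m]) : ∑ i ∈ t, f i ≡ t.card [MOD m] := by
  classical
  induction t using Finset.induction_on with
  | empty => simp; rfl
  | @insert x t hx ih =>
    rw [Finset.sum_insert hx, Finset.card_insert_of_notMem hx]
    have := (h x (Finset.mem_insert_self x t)).add (ih fun i hi => h i (Finset.mem_insert_of_mem hi))
    simpa [Nat.add_comm] using this

lemma part1 {A : Type*} [Fintype A] (hA : 2 ≤ Fintype.card A) {n : ℕ}
    (P : Set (W A n)) (hfin : P.Finite) (hP : MaxJoinlessCode P) :
    ∃ N : ℕ, P.ncard = 1 + (Fintype.card A - 1) * N := by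
  classical
  set q := Fintype.card A with hq
  set s := hfin.toFinset with hs
  -- modular arithmetic
  have hmod1 : q ≡ 1 [MOD q - 1] := by
    have h2 : q - 1 + 1 = q := by omega
    calc q = q - 1 + 1 := h2.symm
    _ ≡ 0 + 1 [MOD q - 1] := Nat.ModEq.add_right 1 (Nat.modEq_zero_iff_dvd.mpr dvd_rfl)
    _ = 1 := by omega
  have hpow : ∀ e : ℕ, q ^ e ≡ 1 [MOD q - 1] := fun e => by
    simpa using hmod1.pow e
  set L := s.sup (fun p => Finset.univ.sup fun i => (p i).length) with hL
  have hbound : ∀ p ∈ s, ∀ i : Fin n, (p i).length ≤ L := by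
    intro p hp i
    exact le_trans (Finset.le_sup (f := fun i => (p i).length) (Finset.mem_univ i))
      (Finset.le_sup (f := fun p => Finset.univ.sup fun i => (p i).length) hp)
  set V := Fin n → List.Vector A L with hV
  let tl : V → W A n := fun w i => (w i).toList
  have hlen : ∀ (w : V) (i : Fin n), (tl w i).length = L := fun w i => (w i).toList_length
  have hEx : ∀ w : V, ∃! p, p ∈ s ∧ initLE p (tl w) := by
    intro w
    obtain ⟨p, hp, hj⟩ := hP.2 (tl w)
    have hps : p ∈ s := hfin.mem_toFinset.mpr hp
    have hple : initLE p (tl w) := initLE_iff.mpr fun i =>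
      comp_pref (hasJoin_iff.mp hj i).symm (by rw [hlen]; exact hbound p hps i)
    refine ⟨p, ⟨hps, hple⟩, ?_⟩
    rintro p' ⟨hp's, hp'le⟩
    by_contra hne
    exact hP.1 p' (hfin.mem_toFinset.mp hp's) p hp hne (hasJoin_iff.mpr fun i =>
      List.prefix_or_prefix_of_prefix (initLE_iff.mp hp'le i) (initLE_iff.mp hple i))
  let g : V → W A n := fun w => (hEx w).choose
  have hg1 : ∀ w, g w ∈ s := fun w => (hEx w).choose_spec.1.1
  have hg2 : ∀ w, initLE (g w) (tl w) := fun w => (hEx w).choose_spec.1.2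
  have hg3 : ∀ w p, p ∈ s → initLE p (tl w) → g w = p := fun w p h1 h2 =>
    ((hEx w).choose_spec.2 p ⟨h1, h2⟩).symm
  have hcard : Fintype.card V = ∑ p ∈ s, (Finset.univ.filter fun w : V => g w = p).card := by
    rw [← Finset.card_univ]
    exact Finset.card_eq_sum_card_fiberwise fun w _ => hg1 w
  have hfib : ∀ p ∈ s, (Finset.univ.filter fun w : V => g w = p).card
      = q ^ (∑ i : Fin n, (L - (p i).length)) := by
    intro p hp
    have heq : (Finset.univ.filter fun w : V => g w = p) =
        (Finset.univ.filter fun w : V => ∀ i, p i <+: (w i).toList) := by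
      ext w
      simp only [Finset.mem_filter, Finset.mem_univ, true_and]
      constructor
      · rintro rfl; exact fun i => initLE_iff.mp (hg2 w) i
      · intro h; exact hg3 w p hp (initLE_iff.mpr h)
    rw [heq, ← Fintype.card_subtype]
    rw [Fintype.card_congr (Equiv.subtypePiEquivPi (p := fun i l => p i <+: List.Vector.toList l))]
    rw [Fintype.card_pi]
    rw [Finset.prod_congr rfl fun i _ => card_pref (p i) (hbound p hp i)]
    rw [Finset.prod_pow_eq_pow_sum]
  have hVcard : Fintype.card V = q ^ (L * n) := by
    rw [Fintype.card_pi]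
    simp [card_vector, ← pow_mul, hq]
  have hsum : (q : ℕ) ^ (L * n) ≡ s.card [MOD q - 1] := by
    rw [← hVcard, hcard]
    calc (∑ p ∈ s, (Finset.univ.filter fun w : V => g w = p).card)
        = ∑ p ∈ s, q ^ (∑ i : Fin n, (L - (p i).length)) := Finset.sum_congr rfl hfib
      _ ≡ s.card [MOD q - 1] := modeq_sum s _ _ (fun p _ => hpow _)
  have hcard1 : s.card ≡ 1 [MOD q - 1] := ((hpow (L * n)).symm.trans hsum).symm
  have hpos : 1 ≤ s.card := by
    obtain ⟨p, hp, -⟩ := hP.2 (epsn A n)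
    exact Finset.card_pos.mpr ⟨p, hfin.mem_toFinset.mpr hp⟩
  obtain ⟨N, hN⟩ := (Nat.modEq_iff_dvd' hpos).mp hcard1.symm
  refine ⟨N, ?_⟩
  rw [Set.ncard_eq_toFinset_card P hfin, ← hs]
  clear hsum hcard1 hcard hfib hg1 hg2 hg3 g hEx hlen tl hVcard hV V hbound hL L
  omega


lemma part2 {A : Type*} [Fintype A] (hA : 2 ≤ Fintype.card A) {n : ℕ} (hn : 1 ≤ n) (N : ℕ) :
    ∃ P : Set (W A n), P.Finite ∧ MaxJoinlessCode P ∧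
      P.ncard = 1 + (Fintype.card A - 1) * N := by
  induction N with
  | zero =>
    refine ⟨{epsn A n}, Set.finite_singleton _, ⟨?_, ?_⟩, by simp⟩
    · intro u hu v hv hne
      rw [Set.mem_singleton_iff] at hu hv
      subst hu; subst hv; exact absurd rfl hne
    · intro x
      exact ⟨epsn A n, rfl, hasJoin_iff.mpr fun i => Or.inr (List.nil_prefix)⟩
  | succ N ih =>
    obtain ⟨P, hfin, hmax, hcard⟩ := ih
    obtain ⟨p, hp, -⟩ := hmax.2 (epsn A n)
    have hA0 : Nonempty A := Fintype.card_pos_iff.mp (by omega)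
    have i : Fin n := ⟨0, hn⟩
    refine ⟨(P \ {p}) ∪ Set.range (child p i), hfin.diff.union (Set.finite_range _),
      ⟨?_, ?_⟩, ?_⟩
    · -- joinless
    -- helper
      have hcomp : ∀ (a : A) (u : W A n), HasJoin u (child p i a) → HasJoin u p := by
        intro a u h
        rw [hasJoin_iff] at h ⊢
        intro j
        by_cases hji : j = i
        · subst hji
          have h1 := h j
          rw [child, Function.update_self] at h1
          rcases h1 with h1 | h1
          · by_cases hl : (u j).length ≤ (p j).length
            · exact Or.inl (List.prefix_of_prefix_length_le h1 (List.prefix_append _ _) hl)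
            · have hlen := h1.length_le
              simp only [List.length_append, List.length_singleton] at hlen
              have : u j = p j ++ [a] := h1.eq_of_length (by
                simp only [List.length_append, List.length_singleton]; omega)
              exact Or.inr (this ▸ List.prefix_append _ _)
          · exact Or.inr ((List.prefix_append _ _).trans h1)
        · have h1 := h j
          rwa [child, Function.update_of_ne hji] at h1
      intro u hu v hv hne hj
      rcases hu with hu | hu <;> rcases hv with hv | hv
      · exact hmax.1 u hu.1 v hv.1 hne hj
      · obtain ⟨a, rfl⟩ := hv
        exact hmax.1 u hu.1 p hp hu.2 (hcomp a u hj)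
      · obtain ⟨a, rfl⟩ := hu
        have hj' : HasJoin v (child p i a) :=
          hasJoin_iff.mpr fun j => (hasJoin_iff.mp hj j).symm
        exact hmax.1 v hv.1 p hp hv.2 (hcomp a v hj')
      · obtain ⟨a, rfl⟩ := hu
        obtain ⟨b, rfl⟩ := hv
        have hab : a ≠ b := fun h => hne (by rw [h])
        have h1 := hasJoin_iff.mp hj i
        rw [child, child, Function.update_self, Function.update_self] at h1
        rcases h1 with h1 | h1 <;>
          · have h2 := h1.eq_of_length (by simp)
            simp only [List.append_cancel_left_eq, List.cons.injEq] at h2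
            first
              | exact hab h2.1
              | exact hab h2.1.symm
    · -- maximal
      intro x
      obtain ⟨p', hp', hj⟩ := hmax.2 x
      by_cases hpp : p' = p
      · subst hpp
        have hcompx := hasJoin_iff.mp hj
        by_cases hcase : (x i).length ≤ (p' i).length
        · obtain ⟨a⟩ := hA0
          refine ⟨child p' i a, Or.inr ⟨a, rfl⟩, hasJoin_iff.mpr fun j => ?_⟩
          by_cases hji : j = i
          · subst hji
            have hxp : x j <+: p' j := comp_pref (hcompx j) hcase
            rw [child, Function.update_self]
            exact Or.inl (hxp.trans (List.prefix_append _ _))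
          · rw [child, Function.update_of_ne hji]; exact hcompx j
        · have hpx : p' i <+: x i := comp_pref (hcompx i).symm (by omega)
          obtain ⟨t, ht⟩ := hpx
          have htne : t ≠ [] := by
            intro h; subst h
            apply hcase
            rw [← ht]; simp
          obtain ⟨a, t', rfl⟩ := List.exists_cons_of_ne_nil htne
          refine ⟨child p' i a, Or.inr ⟨a, rfl⟩, hasJoin_iff.mpr fun j => ?_⟩
          by_cases hji : j = i
          · subst hji
            refine Or.inr ?_
            rw [child, Function.update_self]
            refine ⟨t', ?_⟩
            rw [List.append_assoc]
            simpa using ht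
          · rw [child, Function.update_of_ne hji]; exact hcompx j
      · exact ⟨p', Or.inl ⟨hp', hpp⟩, hj⟩
    · -- cardinality
      have hinj : Function.Injective (child p i) := by
        intro a b h
        have h1 := congrFun h i
        rw [child, child, Function.update_self, Function.update_self] at h1
        simpa using h1
      have hdisj : Disjoint (P \ {p}) (Set.range (child p i)) := by
        rw [Set.disjoint_left]
        rintro w hw ⟨a, rfl⟩
        refine hmax.1 _ hw.1 p hp hw.2 (hasJoin_iff.mpr fun j => ?_)
        by_cases hji : j = i
        · subst hji
          rw [child, Function.update_self]
          exact Or.inr (List.prefix_append _ _)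
        · rw [child, Function.update_of_ne hji]
          exact Or.inl (List.prefix_refl _)
      rw [Set.ncard_union_eq hdisj hfin.diff (Set.finite_range _),
        Set.ncard_diff_singleton_of_mem hp, hcard,
        ← Set.image_univ, Set.ncard_image_of_injective _ hinj, Set.ncard_univ,
        Nat.card_eq_fintype_card]
      rw [Nat.add_sub_cancel_left, Nat.mul_succ]
      generalize (Fintype.card A - 1) * N = m
      omega


/-- Cardinality of finite maximal joinless codes: always of the form
`1 + (|A|-1)·N`, and every such cardinality is realized. -/
theorem maxJoinless_card {A : Type*} [Fintype A] (hA : 2 ≤ Fintype.card A)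
    {n : ℕ} (hn : 1 ≤ n) :
    (∀ P : Set (W A n), P.Finite → MaxJoinlessCode P →
      ∃ N : ℕ, P.ncard = 1 + (Fintype.card A - 1) * N) ∧
    (∀ N : ℕ, ∃ P : Set (W A n), P.Finite ∧ MaxJoinlessCode P ∧
      P.ncard = 1 + (Fintype.card A - 1) * N) :=
  ⟨fun P hfin hmax => part1 hA P hfin hmax, fun N => part2 hA hn N⟩

end BrinThompson
end

section
/- Let |A| = k ≥ 2 and n ≥ 1, and let P ⊆ nA* be a finite joinless code. Then: (1) μ(P) ≤ 1; (2) P is maximal as a joinless code if and only if μ(P) = 1. -/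
namespace BrinThompson

variable {A : Type*} {n : ℕ}

section KraftAux

lemma comp_of_hasJoin {u v : W A n} (h : HasJoin u v) (i : Fin n) :
    u i <+: v i ∨ v i <+: u i := by
  obtain ⟨w, hw⟩ := h
  exact List.prefix_or_prefix_of_prefix ((initLE_iff.1 hw.1) i) ((initLE_iff.1 hw.2.1) i)

lemma prefix_of_agree {u v : List A} (hlen : u.length ≤ v.length)
    (h : ∀ j (h1 : j < u.length) (h2 : j < v.length), u[j] = v[j]) : u <+: v := by
  rw [List.prefix_iff_eq_take]
  apply List.ext_getElem
  · simp [Nat.min_eq_left hlen]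
  · intro j h1 h2
    rw [List.getElem_take]
    exact h j h1 (lt_of_lt_of_le h1 hlen)

lemma comp_of_agree {u v : List A}
    (h : ∀ j (h1 : j < u.length) (h2 : j < v.length), u[j] = v[j]) :
    u <+: v ∨ v <+: u := by
  rcases le_total u.length v.length with hl | hl
  · exact Or.inl (prefix_of_agree hl h)
  · exact Or.inr (prefix_of_agree hl fun j h1 h2 => (h j h2 h1).symm)

/-- Finset of length-`L` extensions (as functions `Fin L → A`) of a word `w`. -/
def Gset [Fintype A] (L : ℕ) (w : List A) : Finset (Fin L → A) :=
  Fintype.piFinset (fun j : Fin L =>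
    if h : (j : ℕ) < w.length then {w[(j : ℕ)]} else Finset.univ)

lemma mem_Gset [Fintype A] {L : ℕ} {w : List A} (hw : w.length ≤ L) {g : Fin L → A} :
    g ∈ Gset L w ↔ w <+: List.ofFn g := by
  rw [Gset, Fintype.mem_piFinset]
  constructor
  · intro h
    refine prefix_of_agree (by simpa using hw) ?_
    intro j h1 h2
    have h2' : j < L := by simpa using h2
    have := h ⟨j, h2'⟩
    rw [dif_pos (by simpa using h1)] at this
    simp only [Finset.mem_singleton] at this
    rw [List.getElem_ofFn]
    exact this.symm
  · intro h j
    by_cases h1 : (j : ℕ) < w.length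
    · rw [dif_pos h1]
      simp only [Finset.mem_singleton]
      have := h.getElem (i := (j : ℕ)) h1
      rw [List.getElem_ofFn] at this
      simpa using this.symm
    · rw [dif_neg h1]; exact Finset.mem_univ _

lemma card_Gset [Fintype A] {L : ℕ} (w : List A) (hw : w.length ≤ L) :
    (Gset L w).card = Fintype.card A ^ (L - w.length) := by
  classical
  rw [Gset, Fintype.card_piFinset]
  have hterm : ∀ j : Fin L,
      (if h : (j : ℕ) < w.length then ({w[(j : ℕ)]} : Finset A) else Finset.univ).card
        = if (j : ℕ) < w.length then 1 else Fintype.card A := by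
    intro j; by_cases h : (j : ℕ) < w.length <;> simp [h]
  simp_rw [hterm]
  rw [Fin.prod_univ_eq_prod_range (fun j => if j < w.length then 1 else Fintype.card A) L]
  rw [← Finset.prod_filter_mul_prod_filter_not (Finset.range L) (fun j => j < w.length)]
  have h1 : (∏ x ∈ (Finset.range L).filter (fun j => j < w.length),
      (if x < w.length then 1 else Fintype.card A)) = 1 := by
    apply Finset.prod_eq_one
    intro x hx
    rw [Finset.mem_filter] at hx
    simp [hx.2]
  have h2 : (Finset.range L).filter (fun j => ¬ j < w.length) = Finset.Ico w.length L := by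
    ext j; simp [Finset.mem_Ico, Nat.not_lt, and_comm]
  rw [h1, one_mul, h2]
  have h3 : ∀ x ∈ Finset.Ico w.length L,
      (if x < w.length then 1 else Fintype.card A) = Fintype.card A := by
    intro x hx
    rw [Finset.mem_Ico] at hx
    exact if_neg (Nat.not_lt.2 hx.1)
  rw [Finset.prod_congr rfl h3, Finset.prod_const, Nat.card_Ico]

end KraftAux

/-- The `n`-dimensional Kraft (in)equality: for a finite joinless code `P`,
`μ(P) ≤ 1`, with equality iff `P` is a maximal joinless code. -/
theorem kraft_inequality {A : Type*} [Fintype A] (hA : 2 ≤ Fintype.card A)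
    {n : ℕ} (hn : 1 ≤ n) (P : Set (W A n)) (hP : P.Finite)
    (hjl : JoinlessCode P) :
    (∑ x ∈ hP.toFinset, ((Fintype.card A : ℝ) ^ (∑ i, (x i).length))⁻¹ ≤ 1) ∧
    (MaxJoinlessCode P ↔
      ∑ x ∈ hP.toFinset, ((Fintype.card A : ℝ) ^ (∑ i, (x i).length))⁻¹ = 1) := by
  classical
  set k := Fintype.card A with hkdef
  have hk1 : 0 < k := lt_of_lt_of_le two_pos hA
  have hkR : (0 : ℝ) < (k : ℝ) := by exact_mod_cast hk1
  set T := hP.toFinset with hTdef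
  set L := T.sup (fun p => Finset.univ.sup (fun i => (p i).length)) with hLdef
  have hlen : ∀ p ∈ T, ∀ i, (p i).length ≤ L := by
    intro p hp i
    calc (p i).length ≤ Finset.univ.sup (fun i => (p i).length) :=
          Finset.le_sup (f := fun i => (p i).length) (Finset.mem_univ i)
      _ ≤ L := Finset.le_sup (f := fun p => Finset.univ.sup (fun i => (p i).length)) hp
  set S : W A n → Finset (Fin n → Fin L → A) :=
    (fun p => Fintype.piFinset (fun i => Gset L (p i))) with hSdef
  have memS : ∀ p ∈ T, ∀ f : Fin n → Fin L → A,
      (f ∈ S p ↔ ∀ i, p i <+: List.ofFn (f i)) := by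
    intro p hp f
    rw [hSdef, Fintype.mem_piFinset]
    exact forall_congr' fun i => mem_Gset (hlen p hp i)
  have cardS : ∀ p ∈ T, (S p).card = k ^ (∑ i, (L - (p i).length)) := by
    intro p hp
    rw [hSdef, Fintype.card_piFinset]
    calc (∏ i, (Gset L (p i)).card)
        = ∏ i, k ^ (L - (p i).length) :=
          Finset.prod_congr rfl (fun i _ => card_Gset (p i) (hlen p hp i))
      _ = k ^ (∑ i, (L - (p i).length)) := Finset.prod_pow_eq_pow_sum _ _ _
  have exp_add : ∀ p ∈ T,
      (∑ i, (L - (p i).length)) + (∑ i, (p i).length) = n * L := by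
    intro p hp
    rw [← Finset.sum_add_distrib]
    rw [Finset.sum_congr rfl (fun i _ => Nat.sub_add_cancel (hlen p hp i))]
    simp [mul_comm]
  have hdisj : ∀ p ∈ T, ∀ q ∈ T, p ≠ q → Disjoint (S p) (S q) := by
    intro p hp q hq hne
    rw [Finset.disjoint_left]
    intro f hfp hfq
    refine hjl p (by simpa [hTdef] using hp) q (by simpa [hTdef] using hq) hne ?_
    refine hasJoin_of_comp fun i => ?_
    exact List.prefix_or_prefix_of_prefix ((memS p hp f).1 hfp i) ((memS q hq f).1 hfq i)
  set N := ∑ p ∈ T, (S p).card with hNdef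
  have hcard : (T.biUnion S).card = N := Finset.card_biUnion hdisj
  have hcardV : Fintype.card (Fin n → Fin L → A) = k ^ (n * L) := by
    rw [Fintype.card_fun, Fintype.card_fun]
    simp only [Fintype.card_fin, ← hkdef]
    rw [← pow_mul, mul_comm]
  have hNle : N ≤ k ^ (n * L) := by
    rw [← hcard, ← hcardV]; exact Finset.card_le_univ _
  have hsum : (∑ x ∈ T, ((k : ℝ) ^ (∑ i, (x i).length))⁻¹)
      = (N : ℝ) / (k : ℝ) ^ (n * L) := by
    have hterm : ∀ x ∈ T, ((k : ℝ) ^ (∑ i, (x i).length))⁻¹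
        = ((S x).card : ℝ) / (k : ℝ) ^ (n * L) := by
      intro x hx
      rw [cardS x hx]
      have hd : (0 : ℝ) < (k : ℝ) ^ (∑ i, (x i).length) := pow_pos hkR _
      rw [eq_div_iff (ne_of_gt (pow_pos hkR _)), ← exp_add x hx, pow_add]
      push_cast
      field_simp
    rw [Finset.sum_congr rfl hterm, ← Finset.sum_div, hNdef]
    push_cast
    ring
  have hkpow : (0 : ℝ) < (k : ℝ) ^ (n * L) := pow_pos hkR _
  -- coverage ↔ maximality
  have hmax_of_cover : T.biUnion S = Finset.univ → MaxJoinlessCode P := by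
    intro hcov
    refine ⟨hjl, fun x => ?_⟩
    have hAne : Nonempty A := Fintype.card_pos_iff.1 hk1
    obtain ⟨a⟩ := hAne
    set f : Fin n → Fin L → A :=
      fun i j => if h : (j : ℕ) < (x i).length then (x i)[(j : ℕ)] else a with hfdef
    have hf : f ∈ T.biUnion S := hcov ▸ Finset.mem_univ f
    obtain ⟨p, hpT, hpf⟩ := Finset.mem_biUnion.1 hf
    refine ⟨p, by simpa [hTdef] using hpT, ?_⟩
    refine hasJoin_of_comp fun i => ?_
    have hpre : p i <+: List.ofFn (f i) := (memS p hpT f).1 hpf i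
    have hagree : x i <+: List.ofFn (f i) ∨ List.ofFn (f i) <+: x i := by
      refine comp_of_agree fun j h1 h2 => ?_
      have h2' : j < L := by simpa using h2
      rw [List.getElem_ofFn]
      simp only [hfdef]
      rw [dif_pos h1]
    rcases hagree with hc | hc
    · exact List.prefix_or_prefix_of_prefix hc hpre
    · exact Or.inr (hpre.trans hc)
  have hcover_of_max : MaxJoinlessCode P → T.biUnion S = Finset.univ := by
    intro hmax
    apply Finset.eq_univ_of_forall
    intro f
    obtain ⟨p, hpP, hj⟩ := hmax.2 (fun i => List.ofFn (f i))
    have hpT : p ∈ T := by simpa [hTdef] using hpP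
    refine Finset.mem_biUnion.2 ⟨p, hpT, (memS p hpT f).2 fun i => ?_⟩
    rcases comp_of_hasJoin hj i with hc | hc
    · have hlef : L ≤ (p i).length := by
        have := hc.length_le; simpa using this
      have : List.ofFn (f i) = p i :=
        hc.eq_of_length (by simp [le_antisymm hlef (hlen p hpT i)])
      rw [← this]
    · exact hc
  constructor
  · rw [hsum]
    rw [div_le_one hkpow]
    exact_mod_cast hNle
  · rw [hsum]
    rw [div_eq_one_iff_eq (ne_of_gt hkpow)]
    constructor
    · intro hmax
      have hcov := hcover_of_max hmax
      have : N = k ^ (n * L) := by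
        rw [← hcard, hcov, Finset.card_univ, hcardV]
      exact_mod_cast this
    · intro heq
      apply hmax_of_cover
      apply Finset.eq_univ_of_card
      rw [hcard, hcardV]
      exact_mod_cast heq

end BrinThompson
end

section
/- Let P, Q ⊆ nA* be joinless codes and define the elementwise join P ∨ Q = {p ∨ q : p ∈ P, q ∈ Q, and p ∨ q exists}. Then: (1) P ∨ Q is a joinless code, and hence (when P, Q are finite) |P ∨ Q| ≤ |P|·|Q|; (2) P and Q are both maximal joinless codes iff P ∨ Q is a maximal joinless code; (3) (P ∨ Q)·(nA*) = P·(nA*) ∩ Q·(nA*). -/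
namespace BrinThompson

variable {A : Type*} {n : ℕ}

lemma initLE_trans {u v w : W A n} (h1 : initLE u v) (h2 : initLE v w) : initLE u w :=
  initLE_iff.2 fun i => (initLE_iff.1 h1 i).trans (initLE_iff.1 h2 i)

lemma initLE_antisymm {u v : W A n} (h1 : initLE u v) (h2 : initLE v u) : u = v :=
  funext fun i => (initLE_iff.1 h1 i).eq_of_length
    (le_antisymm (initLE_iff.1 h1 i).length_le (initLE_iff.1 h2 i).length_le)

/-- Explicit candidate join: coordinatewise the longer word. -/
def joinW (u v : W A n) : W A n :=
  fun i => if (u i).length ≤ (v i).length then v i else u i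

lemma prefix_ite_left {a b : List A} (h : a <+: b ∨ b <+: a) :
    a <+: (if a.length ≤ b.length then b else a) := by
  split
  · rcases h with h | h
    · exact h
    · rw [h.eq_of_length (le_antisymm h.length_le ‹_›)]
  · exact List.prefix_refl _

lemma prefix_ite_right {a b : List A} (h : a <+: b ∨ b <+: a) :
    b <+: (if a.length ≤ b.length then b else a) := by
  split
  · exact List.prefix_refl _
  · rcases h with h | h
    · rw [h.eq_of_length (le_antisymm h.length_le (le_of_not_ge ‹_›))]
    · exact h

lemma isJoin_joinW {u v : W A n} (h : ∀ i, u i <+: v i ∨ v i <+: u i) :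
    isJoin u v (joinW u v) := by
  refine ⟨initLE_iff.2 fun i => prefix_ite_left (h i),
    initLE_iff.2 fun i => prefix_ite_right (h i), ?_⟩
  intro z hu hv
  refine initLE_iff.2 fun i => ?_
  unfold joinW
  split
  · exact initLE_iff.1 hv i
  · exact initLE_iff.1 hu i

/-- Two elements with a common upper bound have a join below that bound. -/
lemma join_of_bound {u v z : W A n} (hu : initLE u z) (hv : initLE v z) :
    isJoin u v (joinW u v) ∧ initLE (joinW u v) z := by
  have hcmp : ∀ i, u i <+: v i ∨ v i <+: u i := fun i =>
    List.prefix_or_prefix_of_prefix (initLE_iff.1 hu i) (initLE_iff.1 hv i)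
  refine ⟨isJoin_joinW hcmp, (isJoin_joinW hcmp).2.2 z hu hv⟩

lemma isJoin_unique {u v w w' : W A n} (h : isJoin u v w) (h' : isJoin u v w') : w = w' :=
  initLE_antisymm (h.2.2 w' h'.1 h'.2.1) (h'.2.2 w h.1 h.2.1)

lemma isJoin_eq_joinW {u v w : W A n} (h : isJoin u v w) : w = joinW u v := by
  have hcmp : ∀ i, u i <+: v i ∨ v i <+: u i := fun i =>
    List.prefix_or_prefix_of_prefix (initLE_iff.1 h.1 i) (initLE_iff.1 h.2.1 i)
  exact isJoin_unique h (isJoin_joinW hcmp)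

lemma mem_genIdeal {C : Set (W A n)} {w : W A n} :
    w ∈ genIdeal C ↔ ∃ c ∈ C, initLE c w := by
  simp [genIdeal, initLE]

/-- Properties of the elementwise join `P ∨ Q` of joinless codes:
it is joinless (with cardinality at most `|P|·|Q|`), it is maximal iff both
`P` and `Q` are, and it generates `P·nA* ∩ Q·nA*`. -/
theorem setJoin_properties {A : Type*} [Fintype A] [Nonempty A] {n : ℕ}
    (hn : 1 ≤ n) (P Q : Set (W A n))
    (hP : JoinlessCode P) (hQ : JoinlessCode Q) :
    (JoinlessCode (setJoin P Q) ∧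
      (P.Finite → Q.Finite → (setJoin P Q).ncard ≤ P.ncard * Q.ncard)) ∧
    ((MaxJoinlessCode P ∧ MaxJoinlessCode Q) ↔ MaxJoinlessCode (setJoin P Q)) ∧
    genIdeal (setJoin P Q) = genIdeal P ∩ genIdeal Q := by
  have hjoinless : JoinlessCode (setJoin P Q) := by
    rintro w1 ⟨p1, hp1, q1, hq1, hj1⟩ w2 ⟨p2, hp2, q2, hq2, hj2⟩ hne ⟨z, hz⟩
    have hw1z : initLE w1 z := hz.1
    have hw2z : initLE w2 z := hz.2.1
    have hp1z : initLE p1 z := initLE_trans hj1.1 hw1z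
    have hp2z : initLE p2 z := initLE_trans hj2.1 hw2z
    have hq1z : initLE q1 z := initLE_trans hj1.2.1 hw1z
    have hq2z : initLE q2 z := initLE_trans hj2.2.1 hw2z
    have hpeq : p1 = p2 := by
      by_contra hne'
      exact hP p1 hp1 p2 hp2 hne' ⟨_, (join_of_bound hp1z hp2z).1⟩
    have hqeq : q1 = q2 := by
      by_contra hne'
      exact hQ q1 hq1 q2 hq2 hne' ⟨_, (join_of_bound hq1z hq2z).1⟩
    subst hpeq; subst hqeq
    exact hne (isJoin_unique hj1 hj2)
  refine ⟨⟨hjoinless, ?_⟩, ⟨?_, ?_⟩, ?_⟩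
  · -- cardinality
    intro hPf hQf
    have hsub : setJoin P Q ⊆ (fun pq : W A n × W A n => joinW pq.1 pq.2) '' (P ×ˢ Q) := by
      rintro w ⟨p, hp, q, hq, hj⟩
      exact ⟨(p, q), ⟨hp, hq⟩, (isJoin_eq_joinW hj).symm⟩
    have hPQf : (P ×ˢ Q).Finite := hPf.prod hQf
    have hprod : (P ×ˢ Q).ncard = P.ncard * Q.ncard := by
      rw [← Nat.card_coe_set_eq, ← Nat.card_coe_set_eq, ← Nat.card_coe_set_eq,
        Nat.card_congr (Equiv.Set.prod P Q), Nat.card_prod]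
    calc (setJoin P Q).ncard ≤ ((fun pq : W A n × W A n => joinW pq.1 pq.2) '' (P ×ˢ Q)).ncard :=
          Set.ncard_le_ncard hsub (hPQf.image _)
      _ ≤ (P ×ˢ Q).ncard := Set.ncard_image_le hPQf
      _ = P.ncard * Q.ncard := hprod
  · -- forward direction of the iff
    rintro ⟨hPm, hQm⟩
    refine ⟨hjoinless, fun x => ?_⟩
    obtain ⟨p, hp, w, hw⟩ := hPm.2 x
    obtain ⟨q, hq, z, hz⟩ := hQm.2 w
    have hwz : initLE w z := hz.1
    have hpz : initLE p z := initLE_trans hw.2.1 hwz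
    have hqz : initLE q z := hz.2.1
    obtain ⟨hjpq, hpqz⟩ := join_of_bound hpz hqz
    have hxz : initLE x z := initLE_trans hw.1 hwz
    exact ⟨joinW p q, ⟨p, hp, q, hq, hjpq⟩, _, (join_of_bound hxz hpqz).1⟩
  · -- backward direction of the iff
    intro hM
    constructor
    · refine ⟨hP, fun x => ?_⟩
      obtain ⟨w, ⟨p, hp, q, hq, hj⟩, z, hz⟩ := hM.2 x
      have hpz : initLE p z := initLE_trans hj.1 hz.2.1
      exact ⟨p, hp, _, (join_of_bound hz.1 hpz).1⟩
    · refine ⟨hQ, fun x => ?_⟩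
      obtain ⟨w, ⟨p, hp, q, hq, hj⟩, z, hz⟩ := hM.2 x
      have hqz : initLE q z := initLE_trans hj.2.1 hz.2.1
      exact ⟨q, hq, _, (join_of_bound hz.1 hqz).1⟩
  · -- ideals
    ext w
    simp only [Set.mem_inter_iff, mem_genIdeal]
    constructor
    · rintro ⟨c, ⟨p, hp, q, hq, hj⟩, hcw⟩
      exact ⟨⟨p, hp, initLE_trans hj.1 hcw⟩, ⟨q, hq, initLE_trans hj.2.1 hcw⟩⟩
    · rintro ⟨⟨p, hp, hpw⟩, ⟨q, hq, hqw⟩⟩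
      obtain ⟨hj, hle⟩ := join_of_bound hpw hqw
      exact ⟨joinW p q, ⟨p, hp, q, hq, hj⟩, hle⟩

end BrinThompson
end

section
/- Let f ∈ n RI^fin_A and let P ⊆ Dom(f) be a finite set. Then: (1) f(P) is a joinless code iff P is a joinless code; (2) if P is a joinless code, then P is maximal as a joinless code iff f(P) is maximal as a joinless code. -/
namespace BrinThompson

variable {A : Type*} {n : ℕ}

lemma hasJoin_of_upper {u v z : W A n} (hu : initLE u z) (hv : initLE v z) :
    HasJoin u v := by
  classical
  rw [initLE_iff] at hu hv
  refine ⟨fun i => if u i <+: v i then v i else u i, ?_, ?_, ?_⟩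
  · rw [initLE_iff]; intro i
    by_cases h : u i <+: v i
    · simpa [h] using h
    · simp [h]
  · rw [initLE_iff]; intro i
    by_cases h : u i <+: v i
    · simp [h]
    · simp only [h, if_false]
      rcases List.prefix_or_prefix_of_prefix (hu i) (hv i) with h' | h'
      · exact absurd h' h
      · exact h'
  · intro z' hu' hv'
    rw [initLE_iff] at hu' hv' ⊢
    intro i
    by_cases h : u i <+: v i
    · simpa [h] using hv' i
    · simpa [h] using hu' i

lemma hasJoin_def {u v : W A n} (h : HasJoin u v) :
    ∃ z, initLE u z ∧ initLE v z := by
  obtain ⟨w, hu, hv, _⟩ := h; exact ⟨w, hu, hv⟩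

lemma mem_dom_cat (F : RIMfin A n) {x : W A n} (hx : x ∈ F.Dom) (r : W A n) :
    cat x r ∈ F.Dom := by
  have h := F.ideal
  rw [IsRightIdeal] at h
  rw [← h]
  exact ⟨x, hx, r, rfl⟩

lemma hasJoin_reflect (F : RIMfin A n) {x y : W A n} (hx : x ∈ F.Dom)
    (hy : y ∈ F.Dom) (h : HasJoin (F.toFun x) (F.toFun y)) : HasJoin x y := by
  obtain ⟨w, hu, hv⟩ := hasJoin_def h
  obtain ⟨r, rfl⟩ := hu
  obtain ⟨s, hs⟩ := hv
  have h1 : F.toFun (cat x r) = F.toFun (cat y s) := by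
    rw [F.morph x hx r, F.morph y hy s, hs]
  have h2 : cat x r = cat y s :=
    F.inj (mem_dom_cat F hx r) (mem_dom_cat F hy s) h1
  exact hasJoin_of_upper ⟨r, rfl⟩ ⟨s, h2⟩

lemma hasJoin_preserve (F : RIMfin A n) {x y : W A n} (hx : x ∈ F.Dom)
    (hy : y ∈ F.Dom) (h : HasJoin x y) :
    HasJoin (F.toFun x) (F.toFun y) := by
  obtain ⟨w, hwx, hwy⟩ := hasJoin_def h
  obtain ⟨r, rfl⟩ := hwx
  obtain ⟨s, hs⟩ := hwy
  refine hasJoin_of_upper (z := F.toFun (cat x r))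
    ⟨r, F.morph x hx r⟩ ⟨s, ?_⟩
  rw [← F.morph y hy s, ← hs]

lemma mem_image_of_imC (F : RIMfin A n) {q m : W A n} (hq : q ∈ F.imC)
    (h : initLE q m) : m ∈ F.toFun '' F.Dom := by
  rw [← F.imC_gen]
  obtain ⟨r, rfl⟩ := h
  exact ⟨q, hq, r, rfl⟩

lemma mem_dom_of_domC (F : RIMfin A n) {c m : W A n} (hc : c ∈ F.domC)
    (h : initLE c m) : m ∈ F.Dom := by
  rw [← F.domC_gen]
  obtain ⟨r, rfl⟩ := h
  exact ⟨c, hc, r, rfl⟩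

/-- For `f ∈ n RI^fin_A` and a finite `S ⊆ Dom(f)`: `f(S)` is joinless iff
`S` is; and for joinless `S`, `S` is maximal iff `f(S)` is maximal. -/
theorem image_joinless_iff {A : Type*} [Fintype A] [Nonempty A] {n : ℕ}
    (hn : 1 ≤ n) (F : RIMfin A n) (S : Set (W A n)) (hS : S.Finite)
    (hSD : S ⊆ F.Dom) :
    (JoinlessCode (F.toFun '' S) ↔ JoinlessCode S) ∧
    (JoinlessCode S →
      (MaxJoinlessCode S ↔ MaxJoinlessCode (F.toFun '' S))) := by
  have hiff : JoinlessCode (F.toFun '' S) ↔ JoinlessCode S := by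
    constructor
    · intro h u hu v hv huv hj
      exact h (F.toFun u) ⟨u, hu, rfl⟩ (F.toFun v) ⟨v, hv, rfl⟩
        (fun he => huv (F.inj (hSD hu) (hSD hv) he))
        (hasJoin_preserve F (hSD hu) (hSD hv) hj)
    · rintro h _ ⟨u, hu, rfl⟩ _ ⟨v, hv, rfl⟩ hne hj
      exact h u hu v hv (fun e => hne (by rw [e]))
        (hasJoin_reflect F (hSD hu) (hSD hv) hj)
  refine ⟨hiff, fun hSjl => ⟨?_, ?_⟩⟩
  · rintro ⟨hjl, hmax⟩
    refine ⟨hiff.mpr hSjl, fun y => ?_⟩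
    obtain ⟨q, hq, hyq⟩ := F.imC_max.2 y
    obtain ⟨w, hyw, hqw⟩ := hasJoin_def hyq
    obtain ⟨z, hz, hfz⟩ := mem_image_of_imC F hq hqw
    obtain ⟨p, hp, hzp⟩ := hmax z
    obtain ⟨m, hzm, hpm⟩ := hasJoin_def hzp
    obtain ⟨a, rfl⟩ := hzm
    obtain ⟨b, hb⟩ := hpm
    refine ⟨F.toFun p, ⟨p, hp, rfl⟩, hasJoin_of_upper (z := F.toFun (cat z a))
      (initLE_trans hyw ⟨a, ?_⟩) ⟨b, ?_⟩⟩
    · rw [F.morph z hz a, hfz]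
    · rw [hb, F.morph p (hSD hp) b]
  · rintro ⟨hjl', hmax'⟩
    refine ⟨hSjl, fun x => ?_⟩
    obtain ⟨c, hc, hxc⟩ := F.domC_max.2 x
    obtain ⟨m, hxm, hcm⟩ := hasJoin_def hxc
    have hm : m ∈ F.Dom := mem_dom_of_domC F hc hcm
    obtain ⟨p', hp', hjm⟩ := hmax' (F.toFun m)
    obtain ⟨p, hp, rfl⟩ := hp'
    have hj := hasJoin_reflect F hm (hSD hp) hjm
    obtain ⟨z, hmz, hpz⟩ := hasJoin_def hj
    exact ⟨p, hp, hasJoin_of_upper (initLE_trans hxm hmz) hpz⟩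

end BrinThompson
end
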